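/- Terms s and t are unifiable if and only if they are NOT separated in any algebra; equivalently, s and t cannot be unified iff there exists a finite algebra separating them. -/

import Mathlib

open FirstOrder Language

set_option linter.unusedSectionVars false

namespace Sep

attribute [local instance] Classical.propDecidable

variable {L : Language} {α : Type} [DecidableEq α]

structure Interp (L : Language) where
  r : ℕ
  M : ∀ n, L.Functions n → Fin n → Fin r → Fin r → ℤ
  c : ∀ n, L.Functions n → Fin r → ℤ

variable {I : Interp L}

def dot {r : ℕ} (q v : Fin r → ℤ) : ℤ := ∑ d, q d * v d
def mv {r : ℕ} (M : Fin r → Fin r → ℤ) (v : Fin r → ℤ) : Fin r → ℤ := fun d => ∑ e, M d e * v e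
def vm {r : ℕ} (q : Fin r → ℤ) (M : Fin r → Fin r → ℤ) : Fin r → ℤ := fun e => ∑ d, q d * M d e
def mm {r : ℕ} (M N : Fin r → Fin r → ℤ) : Fin r → Fin r → ℤ := fun d e => ∑ d', M d d' * N d' e

lemma dot_mv {r : ℕ} (q : Fin r → ℤ) (M : Fin r → Fin r → ℤ) (v : Fin r → ℤ) :
    dot q (mv M v) = dot (vm q M) v := by
  simp only [dot, mv, vm, Finset.mul_sum, Finset.sum_mul]
  rw [Finset.sum_comm]; simp [mul_assoc]

lemma mv_mv {r : ℕ} (M N : Fin r → Fin r → ℤ) (v : Fin r → ℤ) :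
    mv M (mv N v) = mv (mm M N) v := by
  funext d
  simp only [mv, mm, Finset.mul_sum, Finset.sum_mul]
  rw [Finset.sum_comm]; simp [mul_assoc]

lemma mv_add {r : ℕ} (M : Fin r → Fin r → ℤ) (v w : Fin r → ℤ) :
    mv M (v + w) = mv M v + mv M w := by
  funext d; simp [mv, mul_add, Finset.sum_add_distrib]

lemma dot_add {r : ℕ} (q : Fin r → ℤ) (v w : Fin r → ℤ) :
    dot q (v + w) = dot q v + dot q w := by
  simp [dot, mul_add, Finset.sum_add_distrib]

lemma dot_sub {r : ℕ} (q : Fin r → ℤ) (v w : Fin r → ℤ) :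
    dot q (v - w) = dot q v - dot q w := by
  simp [dot, mul_sub, Finset.sum_sub_distrib]

lemma dot_zero {r : ℕ} (v : Fin r → ℤ) : dot (0 : Fin r → ℤ) v = 0 := by simp [dot]
lemma dot_neg {r : ℕ} (q v : Fin r → ℤ) : dot (-q) v = - dot q v := by
  simp [dot]

def delta {r : ℕ} (d : Fin r) : Fin r → ℤ := fun e => if e = d then 1 else 0
lemma dot_delta {r : ℕ} (d : Fin r) (v : Fin r → ℤ) : dot (delta d) v = v d := by
  simp [dot, delta]

def ev (I : Interp L) : L.Term α → (α → Fin I.r → ℤ) → Fin I.r → ℤ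
  | .var x, a => a x
  | .func f ts, a => I.c _ f + ∑ i, mv (I.M _ f i) (ev I (ts i) a)

@[simp] lemma ev_var (a : α → Fin I.r → ℤ) (x : α) : ev I (.var x) a = a x := rfl
lemma ev_func {n : ℕ} (f : L.Functions n) (ts : Fin n → L.Term α) (a : α → Fin I.r → ℤ) :
    ev I (.func f ts) a = I.c _ f + ∑ i, mv (I.M _ f i) (ev I (ts i) a) := rfl

lemma ev_subst (w : L.Term α) (σ : α → L.Term α) (a : α → Fin I.r → ℤ) :
    ev I (w.subst σ) a = ev I w (fun y => ev I (σ y) a) := by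
  induction w with
  | var x => rfl
  | func f ts ih => simp only [Term.subst, ev_func, ih]

def tsize : L.Term α → ℕ
  | .var _ => 1
  | .func _ ts => 1 + ∑ i, tsize (ts i)

lemma tsize_pos (w : L.Term α) : 0 < tsize w := by cases w <;> simp [tsize]

/-- coefficient matrix of variable x in term w -/
def coefM (I : Interp L) (x : α) : L.Term α → Fin I.r → Fin I.r → ℤ
  | .var y => if y = x then fun d e => if e = d then 1 else 0 else 0
  | .func f ts => ∑ i, mm (I.M _ f i) (coefM I x (ts i))

lemma mv_sum {r : ℕ} {ι : Type*} (s : Finset ι) (M : ι → Fin r → Fin r → ℤ) (v : Fin r → ℤ) :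
    mv (∑ i ∈ s, M i) v = ∑ i ∈ s, mv (M i) v := by
  funext d
  simp only [mv, Finset.sum_apply, Finset.sum_mul]
  rw [Finset.sum_comm]

lemma mv_id {r : ℕ} (v : Fin r → ℤ) : mv (fun d e => if e = d then 1 else 0) v = v := by
  funext d
  simp [mv]

@[simp] lemma mv_zero {r : ℕ} (v : Fin r → ℤ) : mv (0 : Fin r → Fin r → ℤ) v = 0 := by
  funext d; simp [mv]

/-- affine update lemma -/
lemma ev_update (w : L.Term α) (x : α) (a : α → Fin I.r → ℤ) (b : Fin I.r → ℤ) :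
    ev I w (Function.update a x b) = ev I w a + mv (coefM I x w) (b - a x) := by
  induction w with
  | var y =>
    by_cases h : y = x
    · subst h
      simp only [ev_var, Function.update_self, coefM, eq_self_iff_true, if_true]
      rw [mv_id]
      abel
    · simp [Function.update_of_ne h, coefM, h]
  | func f ts ih =>
    simp only [ev_func, coefM, mv_sum]
    rw [add_assoc, ← Finset.sum_add_distrib]
    congr 1
    apply Finset.sum_congr rfl
    intro i _
    rw [ih i, mv_add, ← mv_mv]

-- ============ NEW MATERIAL =============

def certSum (I : Interp L) (q : ℕ → Fin I.r → ℤ) :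
    List (L.Term α × L.Term α) → (α → Fin I.r → ℤ) → ℤ
  | [], _ => 0
  | p :: E, a => dot (q 0) (ev I p.1 a - ev I p.2 a) + certSum I (fun j => q (j + 1)) E a

def Cert (E : List (L.Term α × L.Term α)) : Prop :=
  ∃ (I : Interp L) (q : ℕ → Fin I.r → ℤ) (C : ℤ), C ≠ 0 ∧ ∀ a, certSum I q E a = C

def Unif (E : List (L.Term α × L.Term α)) : Prop :=
  ∃ σ : α → L.Term α, ∀ p ∈ E, p.1.subst σ = p.2.subst σ

lemma subst_subst (w : L.Term α) (σ : α → L.Term α) (τ : α → L.Term α) :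
    (w.subst σ).subst τ = w.subst fun y => (σ y).subst τ := by
  induction w with
  | var x => rfl
  | func f ts ih => simp only [Term.subst, ih]

lemma subst_congr {w : L.Term α} {σ τ : α → L.Term α}
    (h : ∀ y ∈ w.varFinset, σ y = τ y) : w.subst σ = w.subst τ := by
  induction w with
  | var x => exact h x (by simp [Term.varFinset])
  | func f ts ih =>
    simp only [Term.subst]
    congr 1
    funext i
    exact ih i fun y hy => h y (by
      simp only [Term.varFinset, Finset.mem_biUnion]
      exact ⟨i, Finset.mem_univ i, hy⟩)

lemma subst_var (w : L.Term α) : w.subst Term.var = w := by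
  induction w with
  | var x => rfl
  | func f ts ih => simp only [Term.subst, ih]

/-- the single-variable substitution -/
def sub1 (x : α) (u : L.Term α) : α → L.Term α := fun y => if y = x then u else .var y

lemma subst_sub1_self {x : α} {u : L.Term α} {w : L.Term α} (h : x ∉ w.varFinset) :
    w.subst (sub1 x u) = w := by
  induction w with
  | var y =>
    simp only [Term.varFinset, Finset.mem_singleton] at h
    simp [Term.subst, sub1, Ne.symm, h]
  | func f ts ih =>
    simp only [Term.varFinset, Finset.mem_biUnion, Finset.mem_univ, true_and, not_exists] at h
    simp only [Term.subst]
    congr 1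
    funext i
    exact ih i (h i)

lemma varFinset_subst (w : L.Term α) (σ : α → L.Term α) :
    (w.subst σ).varFinset ⊆ w.varFinset.biUnion (fun y => (σ y).varFinset) := by
  induction w with
  | var x => simp [Term.subst, Term.varFinset]
  | func f ts ih =>
    simp only [Term.subst, Term.varFinset]
    intro y hy
    simp only [Finset.mem_biUnion, Finset.mem_univ, true_and] at hy
    obtain ⟨i, hi⟩ := hy
    have := ih i hi
    simp only [Finset.mem_biUnion] at this ⊢
    obtain ⟨z, hz, hz2⟩ := this
    exact ⟨z, ⟨i, Finset.mem_univ i, hz⟩, hz2⟩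

lemma varFinset_sub1 {x : α} {u : L.Term α} (hxu : x ∉ u.varFinset) (w : L.Term α) :
    (w.subst (sub1 x u)).varFinset ⊆ (w.varFinset ∪ u.varFinset) \ {x} := by
  intro y hy
  have := varFinset_subst w (sub1 x u) hy
  simp only [Finset.mem_biUnion] at this
  obtain ⟨z, hz, hz2⟩ := this
  simp only [Finset.mem_sdiff, Finset.mem_union, Finset.mem_singleton]
  by_cases h : z = x
  · subst h
    simp only [sub1, if_pos rfl] at hz2
    exact ⟨Or.inr hz2, fun hc => hxu (hc ▸ hz2)⟩
  · simp only [sub1, if_neg h, Term.varFinset, Finset.mem_singleton] at hz2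
    subst hz2
    exact ⟨Or.inl hz, h⟩

lemma dot_addL {r : ℕ} (q p : Fin r → ℤ) (v : Fin r → ℤ) :
    dot (q + p) v = dot q v + dot p v := by
  simp [dot, add_mul, Finset.sum_add_distrib]

lemma dot_negL {r : ℕ} (q v : Fin r → ℤ) : dot (-q) v = - dot q v := by simp [dot]

lemma dot_negR {r : ℕ} (q v : Fin r → ℤ) : dot q (-v) = - dot q v := by simp [dot]

lemma mv_sub {r : ℕ} (M N : Fin r → Fin r → ℤ) (v : Fin r → ℤ) :
    mv (fun d e => M d e - N d e) v = mv M v - mv N v := by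
  funext d; simp [mv, sub_mul, Finset.sum_sub_distrib]

/-- cons for row sequences -/
def qcons {r : ℕ} (q0 : Fin r → ℤ) (q : ℕ → Fin r → ℤ) : ℕ → Fin r → ℤ
  | 0 => q0
  | j + 1 => q j

@[simp] lemma qcons_zero {r : ℕ} (q0 : Fin r → ℤ) (q : ℕ → Fin r → ℤ) : qcons q0 q 0 = q0 := rfl
@[simp] lemma qcons_succ {r : ℕ} (q0 : Fin r → ℤ) (q : ℕ → Fin r → ℤ) :
    (fun j => qcons q0 q (j + 1)) = q := rfl

lemma certSum_cons (q : ℕ → Fin I.r → ℤ) (p : L.Term α × L.Term α) (E) (a) :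
    certSum I q (p :: E) a
      = dot (q 0) (ev I p.1 a - ev I p.2 a) + certSum I (fun j => q (j + 1)) E a := rfl

lemma certSum_zero {E : List (L.Term α × L.Term α)} (a : α → Fin I.r → ℤ) :
    certSum I (fun _ _ => (0:ℤ)) E a = 0 := by
  induction E with
  | nil => rfl
  | cons p E ih => rw [certSum_cons, ih]; simp [dot]

lemma certSum_qcons (q0 : Fin I.r → ℤ) (q : ℕ → Fin I.r → ℤ) (p : L.Term α × L.Term α) (E) (a) :
    certSum I (qcons q0 q) (p :: E) a
      = dot q0 (ev I p.1 a - ev I p.2 a) + certSum I q E a := rfl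

/-- row correction for a variable update, accumulated over a system -/
def rowD (I : Interp L) (x : α) : (ℕ → Fin I.r → ℤ) → List (L.Term α × L.Term α) → Fin I.r → ℤ
  | _, [] => 0
  | q, p :: E =>
      vm (q 0) (fun d e => coefM I x p.1 d e - coefM I x p.2 d e)
        + rowD I x (fun j => q (j + 1)) E

lemma certSum_update (x : α) (q : ℕ → Fin I.r → ℤ) (E : List (L.Term α × L.Term α))
    (a : α → Fin I.r → ℤ) (b : Fin I.r → ℤ) :
    certSum I q E (Function.update a x b)
      = certSum I q E a + dot (rowD I x q E) (b - a x) := by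
  induction E generalizing q with
  | nil => simp [certSum, rowD, dot_zero]
  | cons p E ih =>
    simp only [certSum_cons, rowD, ih]
    rw [ev_update p.1 x a b, ev_update p.2 x a b]
    rw [dot_addL]
    rw [show (ev I p.1 a + mv (coefM I x p.1) (b - a x))
          - (ev I p.2 a + mv (coefM I x p.2) (b - a x))
        = (ev I p.1 a - ev I p.2 a)
          + (mv (coefM I x p.1) (b - a x) - mv (coefM I x p.2) (b - a x)) by abel]
    rw [dot_add, ← mv_sub, dot_mv]
    ring

lemma certSum_map_subst (q : ℕ → Fin I.r → ℤ) (E : List (L.Term α × L.Term α))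
    (σ : α → L.Term α) (a : α → Fin I.r → ℤ) :
    certSum I q (E.map fun p => (p.1.subst σ, p.2.subst σ)) a
      = certSum I q E (fun y => ev I (σ y) a) := by
  induction E generalizing q with
  | nil => simp [certSum]
  | cons p E ih => simp only [List.map_cons, certSum_cons, ih, ev_subst]

lemma sub1_ev_eq_update (x : α) (u : L.Term α) (a : α → Fin I.r → ℤ) :
    (fun y => ev I (sub1 x u y) a) = Function.update a x (ev I u a) := by
  funext y
  by_cases h : y = x
  · subst h; simp [sub1, Function.update_self]
  · simp [sub1, h, Function.update_of_ne h]

/-- deletion step -/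
lemma cert_delete {p : L.Term α × L.Term α} {E : List (L.Term α × L.Term α)}
    (h : Cert E) : Cert (p :: E) := by
  obtain ⟨I, q, C, hC, h⟩ := h
  exact ⟨I, qcons 0 q, C, hC, fun a => by rw [certSum_qcons, dot_zero, h a, zero_add]⟩

/-- elimination step, orientation (var x, u) -/
lemma cert_elim₁ {x : α} {u : L.Term α} {E : List (L.Term α × L.Term α)}
    (h : Cert (E.map fun p => (p.1.subst (sub1 x u), p.2.subst (sub1 x u)))) :
    Cert ((Term.var x, u) :: E) := by
  obtain ⟨I, q, C, hC, h⟩ := h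
  refine ⟨I, qcons (-(rowD I x q E)) q, C, hC, fun a => ?_⟩
  have h1 := h a
  rw [certSum_map_subst, sub1_ev_eq_update, certSum_update] at h1
  rw [certSum_qcons]
  have : ev I (Term.var x) a - ev I u a = -(ev I u a - a x) := by
    simp only [ev_var]; abel
  rw [this, dot_negL, dot_negR]
  linarith

/-- elimination step, orientation (u, var x) -/
lemma cert_elim₂ {x : α} {u : L.Term α} {E : List (L.Term α × L.Term α)}
    (h : Cert (E.map fun p => (p.1.subst (sub1 x u), p.2.subst (sub1 x u)))) :
    Cert ((u, Term.var x) :: E) := by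
  obtain ⟨I, q, C, hC, h⟩ := h
  refine ⟨I, qcons (rowD I x q E) q, C, hC, fun a => ?_⟩
  have h1 := h a
  rw [certSum_map_subst, sub1_ev_eq_update, certSum_update] at h1
  rw [certSum_qcons]
  have : ev I u a - ev I (Term.var x) a = ev I u a - a x := by
    simp only [ev_var]
  rw [this]
  linarith

/-- clash step -/
lemma cert_clash {n m : ℕ} {f : L.Functions n} {g : L.Functions m}
    {ts : Fin n → L.Term α} {us : Fin m → L.Term α} {E : List (L.Term α × L.Term α)}
    (hfg : (⟨n, f⟩ : Σ n, L.Functions n) ≠ ⟨m, g⟩) :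
    Cert ((Term.func f ts, Term.func g us) :: E) := by
  refine ⟨⟨1, fun _ _ _ => 0,
      fun n' h => fun _ => if (⟨n', h⟩ : Σ n, L.Functions n) = ⟨n, f⟩ then (0:ℤ) else 1⟩,
    qcons (fun _ => 1) (fun _ _ => 0), -1, by norm_num, fun a => ?_⟩
  rw [certSum_qcons, certSum_zero, add_zero]
  simp only [ev, mv_zero, Finset.sum_const, smul_zero, add_zero]
  rw [if_neg (Ne.symm hfg)]
  simp [dot]

/-! ### occurs check certificate -/

/-- an edge: a function symbol together with an argument position -/
abbrev Edge (L : Language) := Σ n : ℕ, L.Functions n × Fin n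

/-- `PathTo u p x` : following path `p` from the root of `u` leads to the leaf `x`. -/
inductive PathTo : L.Term α → List (Edge L) → α → Prop
  | nil (x : α) : PathTo (.var x) [] x
  | cons {n : ℕ} (f : L.Functions n) (ts : Fin n → L.Term α) (i : Fin n)
      {p : List (Edge L)} {x : α} :
      PathTo (ts i) p x → PathTo (.func f ts) (⟨n, (f, i)⟩ :: p) x

lemma exists_pathTo {x : α} : ∀ {u : L.Term α}, x ∈ u.varFinset → ∃ p, PathTo u p x := by
  intro u
  induction u with
  | var y =>
    intro h
    simp only [Term.varFinset, Finset.mem_singleton] at h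
    subst h
    exact ⟨[], PathTo.nil x⟩
  | func f ts ih =>
    intro h
    simp only [Term.varFinset, Finset.mem_biUnion, Finset.mem_univ, true_and] at h
    obtain ⟨i, hi⟩ := h
    obtain ⟨p, hp⟩ := ih i hi
    exact ⟨_, PathTo.cons f ts i hp⟩

/-- the cyclic-automaton interpretation attached to a path -/
@[reducible] noncomputable def OccI (pstar : List (Edge L)) : Interp L where
  r := pstar.length
  M := fun n h i d d' =>
    if pstar.get d = ⟨n, (h, i)⟩ ∧ (d' : ℕ) = ((d : ℕ) + 1) % pstar.length then 1 else 0
  c := fun _ _ _ => 1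

lemma edge_inj {n : ℕ} {f : L.Functions n} {i j : Fin n}
    (h : (⟨n, (f, i)⟩ : Edge L) = ⟨n, (f, j)⟩) : i = j := by
  injection h with h1 h2
  exact congrArg Prod.snd h2

lemma occ_claim (pstar : List (Edge L)) (hL : 0 < pstar.length)
    {w : L.Term α} {p : List (Edge L)} {x : α} (hw : PathTo w p x) :
    ∀ (d : ℕ) (hd : d < pstar.length),
    (∀ j (hj : j < p.length),
        p.get ⟨j, hj⟩ = pstar.get ⟨(d + j) % pstar.length, Nat.mod_lt _ hL⟩) →
    ∀ a : α → Fin pstar.length → ℤ,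
      ev (OccI pstar) w a ⟨d, hd⟩
        = a x ⟨(d + p.length) % pstar.length, Nat.mod_lt _ hL⟩ + p.length := by
  induction hw with
  | nil y =>
    intro d hd _ a
    simp only [ev, List.length_nil, Nat.add_zero, Nat.cast_zero, add_zero]
    norm_num
    congr 1
    simp [Nat.mod_eq_of_lt hd]
  | @cons n f ts i p x hp ih =>
    intro d hd halign a
    have h0 : (⟨n, (f, i)⟩ : Edge L) = pstar.get ⟨d, hd⟩ := by
      have h0 := halign 0 (by simp)
      simpa [Nat.mod_eq_of_lt hd] using h0
    set d1 : Fin pstar.length := ⟨(d + 1) % pstar.length, Nat.mod_lt _ hL⟩ with hd1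
    have hrow : ∀ j : Fin n,
        mv ((OccI pstar).M n f j) (ev (OccI pstar) (ts j) a) ⟨d, hd⟩
        = if j = i then ev (OccI pstar) (ts i) a d1 else 0 := by
      intro j
      by_cases hji : j = i
      · subst hji
        rw [if_pos rfl]
        show (∑ e : Fin pstar.length, (if pstar.get ⟨d, hd⟩ = ⟨n, (f, j)⟩ ∧ (e : ℕ) = (d + 1) % pstar.length
            then (1:ℤ) else 0) * ev (OccI pstar) (ts j) a e) = _
        have : ∀ e : Fin pstar.length,
            (if pstar.get ⟨d, hd⟩ = ⟨n, (f, j)⟩ ∧ (e : ℕ) = (d + 1) % pstar.length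
              then (1:ℤ) else 0) * ev (OccI pstar) (ts j) a e
            = if e = d1 then ev (OccI pstar) (ts j) a e else 0 := by
          intro e
          rw [← h0]
          by_cases he : e = d1
          · subst he
            simp [hd1]
          · rw [if_neg, if_neg he, zero_mul]
            rintro ⟨-, hc⟩
            exact he (Fin.ext (by simpa [hd1] using hc))
        rw [Finset.sum_congr rfl fun e _ => this e, Finset.sum_ite_eq' Finset.univ d1]
        simp
      · show (∑ e : Fin pstar.length, (if pstar.get ⟨d, hd⟩ = ⟨n, (f, j)⟩ ∧ (e : ℕ) = (d + 1) % pstar.length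
            then (1:ℤ) else 0) * ev (OccI pstar) (ts j) a e) = _
        rw [if_neg hji, Finset.sum_eq_zero]
        intro e _
        rw [if_neg, zero_mul]
        rintro ⟨hc, -⟩
        rw [← h0] at hc
        exact hji (edge_inj hc).symm
    have hev : ev (OccI pstar) (.func f ts) a ⟨d, hd⟩
        = 1 + ∑ j, (mv ((OccI pstar).M n f j) (ev (OccI pstar) (ts j) a) ⟨d, hd⟩) := by
      show ((OccI pstar).c n f + ∑ j, mv ((OccI pstar).M n f j) (ev (OccI pstar) (ts j) a)) ⟨d, hd⟩ = _
      rw [Pi.add_apply, Finset.sum_apply]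
    rw [hev, Finset.sum_congr rfl fun j _ => hrow j, Finset.sum_ite_eq' Finset.univ i]
    simp only [Finset.mem_univ, if_true]
    have halign' : ∀ j (hj : j < p.length),
        p.get ⟨j, hj⟩ = pstar.get ⟨((d + 1) % pstar.length + j) % pstar.length, Nat.mod_lt _ hL⟩ := by
      intro j hj
      have := halign (j + 1) (by simpa using Nat.succ_lt_succ hj)
      simp only [List.get] at this
      rw [this]
      congr 1
      simp only [Fin.mk.injEq]
      rw [Nat.mod_add_mod]
      congr 1
      omega
    rw [ih ((d + 1) % pstar.length) (Nat.mod_lt _ hL) halign' a]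
    have hidx : ((d + 1) % pstar.length + p.length) % pstar.length
        = (d + (p.length + 1)) % pstar.length := by
      rw [Nat.mod_add_mod]
      congr 1
      omega
    have : (⟨((d + 1) % pstar.length + p.length) % pstar.length, Nat.mod_lt _ hL⟩ : Fin pstar.length)
        = ⟨(d + (List.length p + 1)) % pstar.length, Nat.mod_lt _ hL⟩ := Fin.ext (by simpa using hidx)
    rw [this]
    simp only [List.length_cons]
    push_cast
    ring

lemma occ_main {x : α} {u : L.Term α} {p : List (Edge L)} (hp : PathTo u p x)
    (hL : 0 < p.length) (a : α → Fin p.length → ℤ) :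
    ev (OccI p) u a ⟨0, hL⟩ = a x ⟨0, hL⟩ + p.length := by
  have := occ_claim p hL hp 0 hL (fun j hj => by
    congr 1
    simp [Nat.mod_eq_of_lt hj]) a
  rw [this]
  congr 2
  simp

/-- occurs-check certificate, orientation (var x, u) -/
lemma cert_occurs₁ {x : α} {n : ℕ} {f : L.Functions n} {ts : Fin n → L.Term α}
    (hx : x ∈ (Term.func f ts).varFinset) (E : List (L.Term α × L.Term α)) :
    Cert ((Term.var x, Term.func f ts) :: E) := by
  obtain ⟨p, hp⟩ := exists_pathTo hx
  have hL : 0 < p.length := by cases hp; simp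
  refine ⟨OccI p, qcons (delta ⟨0, hL⟩) (fun _ _ => 0), -(p.length : ℤ), by
    simp only [ne_eq, neg_eq_zero, Nat.cast_eq_zero]
    omega, fun a => ?_⟩
  rw [certSum_qcons, certSum_zero, add_zero, dot_delta]
  simp only [Pi.sub_apply, ev_var]
  rw [occ_main hp hL a]
  ring

/-- occurs-check certificate, orientation (u, var x) -/
lemma cert_occurs₂ {x : α} {n : ℕ} {f : L.Functions n} {ts : Fin n → L.Term α}
    (hx : x ∈ (Term.func f ts).varFinset) (E : List (L.Term α × L.Term α)) :
    Cert ((Term.func f ts, Term.var x) :: E) := by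
  obtain ⟨p, hp⟩ := exists_pathTo hx
  have hL : 0 < p.length := by cases hp; simp
  refine ⟨OccI p, qcons (delta ⟨0, hL⟩) (fun _ _ => 0), (p.length : ℤ), by
    simp only [ne_eq, Nat.cast_eq_zero]
    omega, fun a => ?_⟩
  rw [certSum_qcons, certSum_zero, add_zero, dot_delta]
  simp only [Pi.sub_apply, ev_var]
  rw [occ_main hp hL a]
  ring

/-! ### decomposition certificate -/

def lowv {r : ℕ} (v : Fin (r + 1) → ℤ) : Fin r → ℤ := fun d => v d.castSucc

def liftRow {r : ℕ} (q : Fin r → ℤ) : Fin (r + 1) → ℤ :=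
  fun d' => if hd : (d' : ℕ) < r then q ⟨d', hd⟩ else 0

lemma dot_liftRow {r : ℕ} (q : Fin r → ℤ) (v : Fin (r + 1) → ℤ) :
    dot (liftRow q) v = dot q (lowv v) := by
  rw [dot, Fin.sum_univ_castSucc]
  simp only [liftRow, lowv]
  rw [dif_neg (by simp)]
  simp only [zero_mul, add_zero]
  apply Finset.sum_congr rfl
  intro d _
  rw [dif_pos (by simp [Fin.is_lt])]
  congr 1

/-- extension of an interpretation by one extra dimension reading children of `f` -/
@[reducible] noncomputable def ExtI (I : Interp L) {nf : ℕ} (f : L.Functions nf)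
    (qr : Fin nf → Fin I.r → ℤ) : Interp L where
  r := I.r + 1
  M := fun n h i d d' =>
    if hd : (d : ℕ) < I.r then
      (if hd' : (d' : ℕ) < I.r then I.M n h i ⟨d, hd⟩ ⟨d', hd'⟩ else 0)
    else
      (if hd' : (d' : ℕ) < I.r then
        (if e : (⟨n, h⟩ : Σ m, L.Functions m) = ⟨nf, f⟩ then
          qr (Fin.cast (congrArg Sigma.fst e) i) ⟨d', hd'⟩ else 0)
       else 0)
  c := fun n h d => if hd : (d : ℕ) < I.r then I.c n h ⟨d, hd⟩ else 0

lemma ext_low {nf : ℕ} {f : L.Functions nf} {qr : Fin nf → Fin I.r → ℤ}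
    (w : L.Term α) (a' : α → Fin (I.r + 1) → ℤ) :
    lowv (ev (ExtI I f qr) w a') = ev I w (fun y => lowv (a' y)) := by
  induction w with
  | var y => rfl
  | func g ws ih =>
    funext d
    show (((ExtI I f qr)).c _ g + ∑ i, mv ((ExtI I f qr).M _ g i) (ev (ExtI I f qr) (ws i) a'))
        d.castSucc = _
    rw [Pi.add_apply, Finset.sum_apply]
    have hc : (ExtI I f qr).c _ g d.castSucc = I.c _ g d := by
      show dite _ _ _ = _
      rw [dif_pos (by simp [Fin.is_lt])]
      exact congrArg (I.c _ g) (Fin.ext (by simp))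
    have hm : ∀ i, mv ((ExtI I f qr).M _ g i) (ev (ExtI I f qr) (ws i) a') d.castSucc
        = mv (I.M _ g i) (ev I (ws i) (fun y => lowv (a' y))) d := by
      intro i
      show (∑ d' : Fin (I.r + 1), ((ExtI I f qr).M _ g i) d.castSucc d'
          * ev (ExtI I f qr) (ws i) a' d') = _
      rw [Fin.sum_univ_castSucc]
      have hlast : ((ExtI I f qr).M _ g i) d.castSucc (Fin.last I.r) = 0 := by
        show dite _ _ _ = _
        rw [dif_pos (by simp [Fin.is_lt]), dif_neg (by simp)]
      rw [hlast, zero_mul, add_zero]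
      rw [show ev I (ws i) (fun y => lowv (a' y)) = lowv (ev (ExtI I f qr) (ws i) a') from (ih i).symm]
      apply Finset.sum_congr rfl
      intro d' _
      congr 1
      show dite _ _ _ = _
      rw [dif_pos (by simp [Fin.is_lt]), dif_pos (by simp [Fin.is_lt])]
      simp
    rw [hc]
    show _ + (∑ i, mv ((ExtI I f qr).M _ g i) (ev (ExtI I f qr) (ws i) a') d.castSucc) = _
    rw [Finset.sum_congr rfl fun i _ => hm i]
    rw [show ev I (Term.func g ws) (fun y => lowv (a' y))
        = I.c _ g + ∑ i, mv (I.M _ g i) (ev I (ws i) fun y => lowv (a' y)) from rfl,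
      Pi.add_apply, Finset.sum_apply]

lemma ext_last {nf : ℕ} {f : L.Functions nf} {qr : Fin nf → Fin I.r → ℤ}
    (ws : Fin nf → L.Term α) (a' : α → Fin (I.r + 1) → ℤ) :
    ev (ExtI I f qr) (Term.func f ws) a' (Fin.last I.r)
      = ∑ i, dot (qr i) (ev I (ws i) (fun y => lowv (a' y))) := by
  show ((ExtI I f qr).c _ f + ∑ i, mv ((ExtI I f qr).M _ f i) (ev (ExtI I f qr) (ws i) a'))
      (Fin.last I.r) = _
  rw [Pi.add_apply, Finset.sum_apply]
  have hc : (ExtI I f qr).c _ f (Fin.last I.r) = 0 := by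
    show dite _ _ _ = _
    rw [dif_neg (by simp)]
  rw [hc, zero_add]
  apply Finset.sum_congr rfl
  intro i _
  show (∑ d' : Fin (I.r + 1), ((ExtI I f qr).M _ f i) (Fin.last I.r) d'
      * ev (ExtI I f qr) (ws i) a' d') = _
  rw [Fin.sum_univ_castSucc]
  have hlast : ((ExtI I f qr).M _ f i) (Fin.last I.r) (Fin.last I.r) = 0 := by
    show dite _ _ _ = _
    rw [dif_neg (by simp), dif_neg (by simp)]
  rw [hlast, zero_mul, add_zero]
  rw [show ev I (ws i) (fun y => lowv (a' y)) = lowv (ev (ExtI I f qr) (ws i) a') from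
    (ext_low (ws i) a').symm]
  apply Finset.sum_congr rfl
  intro d' _
  congr 1
  show dite _ _ _ = _
  rw [dif_neg (by simp), dif_pos (by simp [Fin.is_lt]), dif_pos rfl]
  simp [lowv]

lemma certSum_lift {nf : ℕ} {f : L.Functions nf} {qr : Fin nf → Fin I.r → ℤ}
    (q : ℕ → Fin I.r → ℤ) (E : List (L.Term α × L.Term α)) (a' : α → Fin (I.r + 1) → ℤ) :
    certSum (ExtI I f qr) (fun j => liftRow (q j)) E a'
      = certSum I q E (fun y => lowv (a' y)) := by
  induction E generalizing q with
  | nil => rfl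
  | cons p E ih =>
    rw [certSum_cons, certSum_cons]
    rw [show (fun j => (fun j => liftRow (q j)) (j + 1)) = fun j => liftRow (q (j + 1)) from rfl]
    rw [ih]
    congr 1
    rw [dot_liftRow]
    congr 1
    funext d
    simp only [lowv, Pi.sub_apply]
    have h1 := congrFun (ext_low (I := I) (f := f) (qr := qr) p.1 a') d
    have h2 := congrFun (ext_low (I := I) (f := f) (qr := qr) p.2 a') d
    simp only [lowv] at h1 h2
    rw [h1, h2]

lemma certSum_append_ofFn {n : ℕ} (g : Fin n → L.Term α × L.Term α)
    (q : ℕ → Fin I.r → ℤ) (E : List (L.Term α × L.Term α)) (a : α → Fin I.r → ℤ) :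
    certSum I q (List.ofFn g ++ E) a
      = (∑ i : Fin n, dot (q i) (ev I (g i).1 a - ev I (g i).2 a))
        + certSum I (fun j => q (j + n)) E a := by
  induction n generalizing q with
  | zero => simp [List.ofFn_zero]
  | succ n ih =>
    rw [List.ofFn_succ, List.cons_append, certSum_cons, ih]
    rw [Fin.sum_univ_succ]
    simp only [Fin.val_zero, Fin.val_succ, Function.comp]
    rw [add_assoc]
    have : (fun j => q (j + n + 1)) = fun j => q (j + (n + 1)) :=
      funext fun j => congrArg q (by omega)
    rw [this]

/-- decomposition certificate step -/
lemma cert_decomp {n : ℕ} {f : L.Functions n} {ts us : Fin n → L.Term α}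
    {E : List (L.Term α × L.Term α)}
    (h : Cert (List.ofFn (fun i => (ts i, us i)) ++ E)) :
    Cert ((Term.func f ts, Term.func f us) :: E) := by
  obtain ⟨I, q, C, hC, h⟩ := h
  refine ⟨ExtI I f (fun i => q i), qcons (delta (Fin.last I.r)) (fun j => liftRow (q (j + n))),
    C, hC, fun a' => ?_⟩
  rw [certSum_qcons, certSum_lift, dot_delta]
  simp only [Pi.sub_apply]
  rw [ext_last, ext_last]
  rw [← Finset.sum_sub_distrib]
  have : ∀ i : Fin n, dot (q i) (ev I (ts i) (fun y => lowv (a' y)))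
      - dot (q i) (ev I (us i) (fun y => lowv (a' y)))
      = dot (q i) (ev I (ts i) (fun y => lowv (a' y)) - ev I (us i) (fun y => lowv (a' y))) := by
    intro i
    rw [dot_sub]
  rw [Finset.sum_congr rfl fun i _ => this i]
  have := h (fun y => lowv (a' y))
  rw [certSum_append_ofFn] at this
  exact this

/-! ### measures and unifiability transfers -/

def vset : List (L.Term α × L.Term α) → Finset α
  | [] => ∅
  | p :: E => p.1.varFinset ∪ p.2.varFinset ∪ vset E

def lsize : List (L.Term α × L.Term α) → ℕ
  | [] => 0
  | p :: E => tsize p.1 + tsize p.2 + lsize E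

lemma unif_nil : Unif ([] : List (L.Term α × L.Term α)) := ⟨Term.var, by simp⟩

lemma trans_delete {s : L.Term α} {E : List (L.Term α × L.Term α)}
    (h : Unif E) : Unif ((s, s) :: E) := by
  obtain ⟨σ, hσ⟩ := h
  exact ⟨σ, by
    rintro p hp
    rcases List.mem_cons.mp hp with rfl | hp
    · rfl
    · exact hσ p hp⟩

lemma trans_elim₁ {x : α} {u : L.Term α} {E : List (L.Term α × L.Term α)}
    (hxu : x ∉ u.varFinset)
    (h : Unif (E.map fun p => (p.1.subst (sub1 x u), p.2.subst (sub1 x u)))) :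
    Unif ((Term.var x, u) :: E) := by
  obtain ⟨σ, hσ⟩ := h
  refine ⟨fun y => (sub1 x u y).subst σ, ?_⟩
  rintro p hp
  rcases List.mem_cons.mp hp with rfl | hp
  · show (Term.var x).subst (fun y => (sub1 x u y).subst σ) = _
    rw [← subst_subst, ← subst_subst]
    show ((Term.var x).subst (sub1 x u)).subst σ = (u.subst (sub1 x u)).subst σ
    rw [subst_sub1_self hxu]
    simp [Term.subst, sub1]
  · rw [← subst_subst, ← subst_subst]
    exact hσ (p.1.subst (sub1 x u), p.2.subst (sub1 x u))
      (List.mem_map.mpr ⟨p, hp, rfl⟩)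

lemma trans_elim₂ {x : α} {u : L.Term α} {E : List (L.Term α × L.Term α)}
    (hxu : x ∉ u.varFinset)
    (h : Unif (E.map fun p => (p.1.subst (sub1 x u), p.2.subst (sub1 x u)))) :
    Unif ((u, Term.var x) :: E) := by
  obtain ⟨σ, hσ⟩ := trans_elim₁ hxu h
  refine ⟨σ, ?_⟩
  rintro p hp
  rcases List.mem_cons.mp hp with rfl | hp
  · exact (hσ (Term.var x, u) (by simp)).symm
  · exact hσ p (by simp [hp])

lemma trans_decomp {n : ℕ} {f : L.Functions n} {ts us : Fin n → L.Term α}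
    {E : List (L.Term α × L.Term α)}
    (h : Unif (List.ofFn (fun i => (ts i, us i)) ++ E)) :
    Unif ((Term.func f ts, Term.func f us) :: E) := by
  obtain ⟨σ, hσ⟩ := h
  refine ⟨σ, ?_⟩
  rintro p hp
  rcases List.mem_cons.mp hp with rfl | hp
  · show Term.func f (fun i => (ts i).subst σ) = Term.func f (fun i => (us i).subst σ)
    congr 1
    funext i
    exact hσ (ts i, us i) (List.mem_append.mpr (Or.inl (List.mem_ofFn.mpr ⟨i, rfl⟩)))
  · exact hσ p (List.mem_append.mpr (Or.inr hp))

lemma vset_tail_subset (p : L.Term α × L.Term α) (E : List (L.Term α × L.Term α)) :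
    vset E ⊆ vset (p :: E) := by
  intro y hy
  simp only [vset, Finset.mem_union]
  exact Or.inr hy

lemma lsize_ofFn_append {n : ℕ} (g : Fin n → L.Term α × L.Term α)
    (E : List (L.Term α × L.Term α)) :
    lsize (List.ofFn g ++ E) = (∑ i, (tsize (g i).1 + tsize (g i).2)) + lsize E := by
  induction n with
  | zero => simp [List.ofFn_zero, lsize]
  | succ n ih =>
    rw [List.ofFn_succ, List.cons_append]
    show tsize (g 0).1 + tsize (g 0).2 + lsize (List.ofFn (fun i => g i.succ) ++ E) = _
    rw [ih, Fin.sum_univ_succ]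
    ring

lemma vset_append (A B : List (L.Term α × L.Term α)) :
    vset (A ++ B) = vset A ∪ vset B := by
  induction A with
  | nil => simp [vset]
  | cons p A ih =>
    show vset (p :: (A ++ B)) = _
    simp only [vset, ih, Finset.union_assoc]

lemma vset_ofFn_subset : ∀ {n : ℕ} (ts us : Fin n → L.Term α),
    vset (List.ofFn fun i => (ts i, us i)) ⊆
      (Finset.univ.biUnion fun i => (ts i).varFinset)
        ∪ (Finset.univ.biUnion fun i => (us i).varFinset) := by
  intro n
  induction n with
  | zero => intro ts us; simp [List.ofFn_zero, vset]
  | succ m ih =>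
    intro ts us
    rw [List.ofFn_succ]
    intro y hy
    simp only [vset, Finset.mem_union] at hy
    simp only [Finset.mem_union, Finset.mem_biUnion, Finset.mem_univ, true_and]
    rcases hy with (h | h) | h
    · exact Or.inl ⟨0, h⟩
    · exact Or.inr ⟨0, h⟩
    · have := ih (fun i => ts i.succ) (fun i => us i.succ) h
      simp only [Finset.mem_union, Finset.mem_biUnion, Finset.mem_univ, true_and] at this
      rcases this with ⟨i, hi⟩ | ⟨i, hi⟩
      · exact Or.inl ⟨i.succ, hi⟩
      · exact Or.inr ⟨i.succ, hi⟩

lemma vset_ofFn_append_subset {n : ℕ} {f : L.Functions n} {ts us : Fin n → L.Term α}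
    (E : List (L.Term α × L.Term α)) :
    vset (List.ofFn (fun i => (ts i, us i)) ++ E)
      ⊆ vset ((Term.func f ts, Term.func f us) :: E) := by
  intro y hy
  rw [vset_append, Finset.mem_union] at hy
  show y ∈ (Term.func f ts).varFinset ∪ (Term.func f us).varFinset ∪ vset E
  simp only [Finset.mem_union]
  rcases hy with h | h
  · have := vset_ofFn_subset ts us h
    simp only [Finset.mem_union] at this
    rcases this with h | h
    · exact Or.inl (Or.inl (by simpa [Term.varFinset] using h))
    · exact Or.inl (Or.inr (by simpa [Term.varFinset] using h))
  · exact Or.inr h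

/-- eliminating a variable shrinks the variable set -/
lemma vset_elim_subset {x : α} {u : L.Term α} (hxu : x ∉ u.varFinset)
    (E : List (L.Term α × L.Term α)) :
    vset (E.map fun p => (p.1.subst (sub1 x u), p.2.subst (sub1 x u)))
      ⊆ ((vset E ∪ u.varFinset) \ {x}) := by
  induction E with
  | nil => simp [vset]
  | cons p E ih =>
    intro y hy
    simp only [List.map_cons, vset, Finset.mem_union] at hy
    simp only [Finset.mem_sdiff, Finset.mem_union, Finset.mem_singleton, vset]
    rcases hy with (h | h) | h
    · have := varFinset_sub1 hxu p.1 h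
      simp only [Finset.mem_sdiff, Finset.mem_union, Finset.mem_singleton] at this
      tauto
    · have := varFinset_sub1 hxu p.2 h
      simp only [Finset.mem_sdiff, Finset.mem_union, Finset.mem_singleton] at this
      tauto
    · have := ih h
      simp only [Finset.mem_sdiff, Finset.mem_union, Finset.mem_singleton] at this
      tauto

/-- The main lemma: a non-unifiable system has a certificate. -/
theorem cert_of_not_unif_aux :
    ∀ (N S : ℕ) (E : List (L.Term α × L.Term α)),
      (vset E).card ≤ N → lsize E ≤ S → ¬ Unif E → Cert E := by
  intro N
  induction N using Nat.strong_induction_on with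
  | _ N ihN =>
    intro S
    induction S using Nat.strong_induction_on with
    | _ S ihS =>
      intro E hN hS hU
      match E with
      | [] => exact absurd unif_nil hU
      | (s, t) :: E' =>
        by_cases hst : s = t
        · subst hst
          refine cert_delete (ihS (lsize E') ?_ E' ?_ le_rfl ?_)
          · have h1 := tsize_pos s
            simp only [lsize] at hS
            omega
          · exact le_trans (Finset.card_le_card (vset_tail_subset _ _)) hN
          · exact fun h => hU (trans_delete h)
        · match s, t with
          | .var x, t =>
            by_cases hxt : x ∈ t.varFinset
            · match t with
              | .var y =>
                exfalso
                simp only [Term.varFinset, Finset.mem_singleton] at hxt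
                exact hst (by rw [hxt])
              | .func f ts => exact cert_occurs₁ hxt E'
            · -- eliminate x
              have hxin : x ∈ vset ((Term.var x, t) :: E') := by
                simp [vset, Term.varFinset]
              have hsub := vset_elim_subset (u := t) hxt E'
              have hcard : (vset (E'.map fun p =>
                  (p.1.subst (sub1 x t), p.2.subst (sub1 x t)))).card < N := by
                have h1 : vset (E'.map fun p => (p.1.subst (sub1 x t), p.2.subst (sub1 x t)))
                    ⊆ (vset ((Term.var x, t) :: E')) \ {x} := by
                  intro y hy
                  have := hsub hy
                  simp only [Finset.mem_sdiff, Finset.mem_union, Finset.mem_singleton] at this ⊢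
                  refine ⟨?_, this.2⟩
                  simp only [vset, Finset.mem_union]
                  tauto
                calc (vset (E'.map fun p => (p.1.subst (sub1 x t), p.2.subst (sub1 x t)))).card
                    ≤ ((vset ((Term.var x, t) :: E')) \ {x}).card := Finset.card_le_card h1
                  _ < (vset ((Term.var x, t) :: E')).card := by
                      apply Finset.card_lt_card
                      constructor
                      · exact Finset.sdiff_subset
                      · intro hc
                        have := hc hxin
                        simp at this
                  _ ≤ N := hN
              refine cert_elim₁ (ihN _ hcard _ _ le_rfl le_rfl ?_)
              exact fun h => hU (trans_elim₁ hxt h)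
          | .func f ts, .var x =>
            by_cases hxt : x ∈ (Term.func f ts).varFinset
            · exact cert_occurs₂ hxt E'
            · have hxin : x ∈ vset ((Term.func f ts, Term.var x) :: E') := by
                simp [vset, Term.varFinset]
              have hsub := vset_elim_subset (u := Term.func f ts) hxt E'
              have hcard : (vset (E'.map fun p =>
                  (p.1.subst (sub1 x (Term.func f ts)), p.2.subst (sub1 x (Term.func f ts))))).card
                    < N := by
                have h1 : vset (E'.map fun p =>
                      (p.1.subst (sub1 x (Term.func f ts)), p.2.subst (sub1 x (Term.func f ts))))
                    ⊆ (vset ((Term.func f ts, Term.var x) :: E')) \ {x} := by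
                  intro y hy
                  have := hsub hy
                  simp only [Finset.mem_sdiff, Finset.mem_union, Finset.mem_singleton] at this ⊢
                  refine ⟨?_, this.2⟩
                  simp only [vset, Finset.mem_union]
                  tauto
                calc _ ≤ ((vset ((Term.func f ts, Term.var x) :: E')) \ {x}).card :=
                      Finset.card_le_card h1
                  _ < (vset ((Term.func f ts, Term.var x) :: E')).card := by
                      apply Finset.card_lt_card
                      constructor
                      · exact Finset.sdiff_subset
                      · intro hc
                        have := hc hxin
                        simp at this
                  _ ≤ N := hN
              refine cert_elim₂ (ihN _ hcard _ _ le_rfl le_rfl ?_)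
              exact fun h => hU (trans_elim₂ hxt h)
          | .func (l := n) f ts, .func (l := m) g us =>
            by_cases hfg : (⟨n, f⟩ : Σ n, L.Functions n) = ⟨m, g⟩
            · -- decompose
              obtain ⟨rfl, hgf⟩ : n = m ∧ HEq f g := by
                injection hfg with h1 h2
                exact ⟨h1, h2⟩
              have hgf' : f = g := eq_of_heq hgf
              subst hgf'
              refine cert_decomp (ihS (lsize (List.ofFn (fun i => (ts i, us i)) ++ E')) ?_ _ ?_
                le_rfl ?_)
              · rw [lsize_ofFn_append, Finset.sum_add_distrib]
                simp only [lsize, tsize] at hS ⊢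
                omega
              · exact le_trans (Finset.card_le_card (vset_ofFn_append_subset E')) hN
              · exact fun h => hU (trans_decomp h)
            · exact cert_clash hfg

theorem cert_of_not_unif (E : List (L.Term α × L.Term α)) (hU : ¬ Unif E) : Cert E :=
  cert_of_not_unif_aux (vset E).card (lsize E) E le_rfl le_rfl hU

/-! ### the finite algebra and the final theorem -/

def zmv {r m : ℕ} (M : Fin r → Fin r → ℤ) (v : Fin r → ZMod m) : Fin r → ZMod m :=
  fun d => ∑ e, (M d e : ZMod m) * v e

/-- the finite affine algebra attached to an interpretation -/
noncomputable def SA (I : Interp L) (m : ℕ) : L.Structure (Fin I.r → ZMod m) where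
  funMap := fun {n} f v => (fun d => (I.c n f d : ZMod m)) + ∑ i, zmv (I.M n f i) (v i)
  RelMap := fun _ _ => False

lemma realize_cast (I : Interp L) (m : ℕ) (w : L.Term α) (a : α → Fin I.r → ℤ) :
    @Term.realize L (Fin I.r → ZMod m) (SA I m) α (fun y d => ((a y d : ℤ) : ZMod m)) w
      = fun d => ((ev I w a d : ℤ) : ZMod m) := by
  induction w with
  | var y => rfl
  | func f ts ih =>
    show (fun d => (I.c _ f d : ZMod m))
        + (∑ i, zmv (I.M _ f i) (@Term.realize L (Fin I.r → ZMod m) (SA I m) α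
            (fun y d => ((a y d : ℤ) : ZMod m)) (ts i))) = _
    funext d
    rw [Pi.add_apply, Finset.sum_apply]
    rw [show ev I (Term.func f ts) a
        = I.c _ f + ∑ i, mv (I.M _ f i) (ev I (ts i) a) from rfl]
    rw [Pi.add_apply, Finset.sum_apply]
    push_cast
    congr 1
    apply Finset.sum_congr rfl
    intro i _
    rw [ih i]
    show (∑ e, (I.M _ f i d e : ZMod m) * ((ev I (ts i) a e : ℤ) : ZMod m))
      = ((mv (I.M _ f i) (ev I (ts i) a) d : ℤ) : ZMod m)
    rw [show mv (I.M _ f i) (ev I (ts i) a) d = ∑ e, I.M _ f i d e * ev I (ts i) a e from rfl]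
    push_cast
    rfl

/-- The hard direction: non-unifiable terms are separated by a finite algebra. -/
theorem hard {k : ℕ} (s t : L.Term (Fin k)) (hU : ¬ Unif [(s, t)]) :
    ∃ (A : Type) (_ : Fintype A) (_ : L.Structure A) (_ : Nonempty A),
      ∀ v : Fin k → A, s.realize v ≠ t.realize v := by
  obtain ⟨I, q, C, hC, h⟩ := cert_of_not_unif _ hU
  set m : ℕ := C.natAbs + 1 with hm
  haveI : NeZero m := ⟨by omega⟩
  refine ⟨Fin I.r → ZMod m, Pi.instFintype, SA I m, ⟨0⟩, fun v heq => ?_⟩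
  choose a ha using fun (y : Fin k) (d : Fin I.r) => ZMod.intCast_surjective (n := m) (v y d)
  have hv : v = fun y d => ((a y d : ℤ) : ZMod m) :=
    funext fun y => funext fun d => (ha y d).symm
  rw [hv] at heq
  letI := SA I m
  rw [realize_cast I m s a, realize_cast I m t a] at heq
  have hdvd : ∀ d, (m : ℤ) ∣ (ev I s a d - ev I t a d) := by
    intro d
    have := congrFun heq d
    rw [← ZMod.intCast_zmod_eq_zero_iff_dvd]
    push_cast
    rw [this]
    ring
  have hCdvd : (m : ℤ) ∣ C := by
    have hC' := h a
    rw [certSum_cons] at hC'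
    rw [show certSum I (fun j => q (j + 1)) [] a = 0 from rfl, add_zero] at hC'
    rw [← hC']
    apply Finset.dvd_sum
    intro d _
    exact Dvd.dvd.mul_left (by simpa using hdvd d) (q 0 d)
  have : m ∣ C.natAbs := by
    have h2 := Int.natAbs_dvd_natAbs.mpr hCdvd
    simpa using h2
  have : m ≤ C.natAbs := Nat.le_of_dvd (by omega) this
  omega

end Sep

/-- Terms s and t are unifiable iff they are NOT separated in any (nonempty) algebra;
equivalently, s and t cannot be unified iff there exists a finite algebra separating them.
(The signature has finitely many operation symbols.) -/
theorem unifiable_iff_not_separated {L : Language} [Finite (Σ n : ℕ, L.Functions n)]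
    {k : ℕ} (s t : L.Term (Fin k)) :
    ((∃ (β : Type) (σ : Fin k → L.Term β), s.subst σ = t.subst σ) ↔
      ¬ ∃ (A : Type) (_ : L.Structure A) (_ : Nonempty A),
        ∀ v : Fin k → A, s.realize v ≠ t.realize v) ∧
    ((¬ ∃ (β : Type) (σ : Fin k → L.Term β), s.subst σ = t.subst σ) ↔
      ∃ (A : Type) (_ : Fintype A) (_ : L.Structure A) (_ : Nonempty A),
        ∀ v : Fin k → A, s.realize v ≠ t.realize v) := by
  classical
  have easy : (∃ (β : Type) (σ : Fin k → L.Term β), s.subst σ = t.subst σ) →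
      ∀ (A : Type) (SA : L.Structure A), Nonempty A →
        ¬ (∀ v : Fin k → A, s.realize v ≠ t.realize v) := by
    rintro ⟨β, σ, hσ⟩ A SA ⟨a0⟩ hsep
    apply hsep (fun i => (σ i).realize (fun _ : β => a0))
    rw [← Term.realize_subst, ← Term.realize_subst, hσ]
  have hard : (¬ ∃ (β : Type) (σ : Fin k → L.Term β), s.subst σ = t.subst σ) →
      ∃ (A : Type) (_ : Fintype A) (_ : L.Structure A) (_ : Nonempty A),
        ∀ v : Fin k → A, s.realize v ≠ t.realize v := by
    intro h
    apply Sep.hard s t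
    rintro ⟨σ, hσ⟩
    exact h ⟨Fin k, σ, hσ (s, t) (by simp)⟩
  constructor
  · constructor
    · rintro hu ⟨A, SA, nA, hsep⟩
      exact easy hu A SA nA hsep
    · intro hns
      by_contra hnu
      obtain ⟨A, fA, SA, nA, hsep⟩ := hard hnu
      exact hns ⟨A, SA, nA, hsep⟩
  · constructor
    · exact hard
    · rintro ⟨A, fA, SA, nA, hsep⟩ hu
      exact easy hu A SA nA hsep
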